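/- Let n and T be positive integers such that 1 + 2n + 2n² < T²/10. Then for all real t with −1 ≤ t ≤ 1, one has |p_n(t) − P_n(t)| ≤ (3/2) · 4^n / T². -/

import Mathlib

/-- The Legendre polynomials: `P_0(t) = 1`, `P_1(t) = t` and
`(n+1)·P_{n+1}(t) = (2n+1)·t·P_n(t) − n·P_{n−1}(t)` for `n ≥ 1`. -/
noncomputable def P : ℕ → ℝ → ℝ
  | 0 => fun _ => 1
  | 1 => fun t => t
  | n + 2 => fun t =>
      ((2 * (n : ℝ) + 3) * t * P (n + 1) t - ((n : ℝ) + 1) * P n t) / ((n : ℝ) + 2)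

/-- The rescaled Racah polynomials: `p_0(t) = 1`, `p_1(t) = t + 1/(2T²)` and
`((n+1)/(2n+1))·p_{n+1}(t) = t·p_n(t) + ((2n²+2n+1)/(2T²))·p_n(t)
  − (1 − n²/T²)²·(n/(2n+1))·p_{n−1}(t)` for `n ≥ 1`. -/
noncomputable def p (T : ℕ) : ℕ → ℝ → ℝ
  | 0 => fun _ => 1
  | 1 => fun t => t + 1 / (2 * (T : ℝ) ^ 2)
  | n + 2 => fun t =>
      ((2 * ((n : ℝ) + 1) + 1) / ((n : ℝ) + 2)) *
        ((t + (2 * ((n : ℝ) + 1) ^ 2 + 2 * ((n : ℝ) + 1) + 1) / (2 * (T : ℝ) ^ 2)) *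
          p T (n + 1) t)
      - (1 - ((n : ℝ) + 1) ^ 2 / (T : ℝ) ^ 2) ^ 2 * (((n : ℝ) + 1) / ((n : ℝ) + 2)) * p T n t

open Finset Real

noncomputable def aa : ℕ → ℝ
  | 0 => 1
  | k + 1 => aa k * (2 * (k : ℝ) + 1) / (2 * (k : ℝ) + 2)

lemma aa_pos (k : ℕ) : 0 < aa k := by
  induction k with
  | zero => norm_num [aa]
  | succ k ih => rw [aa]; positivity

lemma aa_succ (k : ℕ) : aa (k + 1) = aa k * (2 * (k : ℝ) + 1) / (2 * (k : ℝ) + 2) := by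
  rw [aa]

lemma two_step {Q : ℕ → Prop} (h0 : Q 0) (h1 : Q 1)
    (hstep : ∀ n, Q n → Q (n + 1) → Q (n + 2)) : ∀ n, Q n := by
  have key : ∀ n, Q n ∧ Q (n + 1) := by
    intro n
    induction n with
    | zero => exact ⟨h0, h1⟩
    | succ k ih => exact ⟨ih.2, hstep k ih.1 ih.2⟩
  exact fun n => (key n).1

lemma P_cos (θ : ℝ) : ∀ n, P n (Real.cos θ) =
    ∑ q ∈ antidiagonal n, aa q.1 * aa q.2 * Real.cos (((q.1 : ℝ) - (q.2 : ℝ)) * θ) := by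
  apply two_step
  · simp [P, Finset.Nat.antidiagonal_zero, aa]
  · rw [show (1 : ℕ) = 0 + 1 from rfl, Finset.Nat.sum_antidiagonal_succ]
    simp only [Finset.Nat.antidiagonal_zero, Finset.sum_singleton]
    simp only [aa]
    push_cast
    rw [show ((0:ℝ) - 1) * θ = -(1 * θ) by ring, Real.cos_neg]
    simp [P]
    ring
  · intro n ih0 ih1
    have hne : ((n : ℝ) + 2) ≠ 0 := by positivity
    show ((2 * (n : ℝ) + 3) * Real.cos θ * P (n + 1) (Real.cos θ)
        - ((n : ℝ) + 1) * P n (Real.cos θ)) / ((n : ℝ) + 2) = _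
    rw [ih0, ih1, div_eq_iff hne]
    -- expand cos θ * sum
    have key : ∀ i j : ℕ, Real.cos θ * Real.cos (((i : ℝ) - (j : ℝ)) * θ)
        = (Real.cos (((i : ℝ) + 1 - (j : ℝ)) * θ)
           + Real.cos (((i : ℝ) - ((j : ℝ) + 1)) * θ)) / 2 := by
      intro i j
      have h1 := Real.cos_add (((i : ℝ) - (j : ℝ)) * θ) θ
      have h2 := Real.cos_sub (((i : ℝ) - (j : ℝ)) * θ) θ
      have e1 : ((i : ℝ) - (j : ℝ)) * θ + θ = ((i : ℝ) + 1 - (j : ℝ)) * θ := by ring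
      have e2 : ((i : ℝ) - (j : ℝ)) * θ - θ = ((i : ℝ) - ((j : ℝ) + 1)) * θ := by ring
      rw [e1] at h1; rw [e2] at h2
      linarith
    have hcF : Real.cos θ * (∑ q ∈ antidiagonal (n + 1),
          aa q.1 * aa q.2 * Real.cos (((q.1 : ℝ) - (q.2 : ℝ)) * θ))
        = ((∑ q ∈ antidiagonal (n + 1),
            aa q.1 * aa q.2 * Real.cos (((q.1 : ℝ) + 1 - (q.2 : ℝ)) * θ))
          + ∑ q ∈ antidiagonal (n + 1),
            aa q.1 * aa q.2 * Real.cos (((q.1 : ℝ) - ((q.2 : ℝ) + 1)) * θ)) / 2 := by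
      rw [Finset.mul_sum, ← Finset.sum_add_distrib, Finset.sum_div]
      apply Finset.sum_congr rfl
      intro q _
      have := key q.1 q.2
      calc Real.cos θ * (aa q.1 * aa q.2 * Real.cos (((q.1 : ℝ) - (q.2 : ℝ)) * θ))
          = aa q.1 * aa q.2 * (Real.cos θ * Real.cos (((q.1 : ℝ) - (q.2 : ℝ)) * θ)) := by ring
        _ = _ := by rw [this]; ring
    have hA : (∑ q ∈ antidiagonal (n + 1),
          aa q.1 * aa q.2 * Real.cos (((q.1 : ℝ) + 1 - (q.2 : ℝ)) * θ))
        = aa (n + 1) * aa 0 * Real.cos (((n : ℝ) + 2) * θ)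
          + ∑ q ∈ antidiagonal n,
            aa q.1 * aa (q.2 + 1) * Real.cos (((q.1 : ℝ) - (q.2 : ℝ)) * θ) := by
      rw [Finset.Nat.sum_antidiagonal_succ'
        (f := fun q => aa q.1 * aa q.2 * Real.cos (((q.1 : ℝ) + 1 - (q.2 : ℝ)) * θ))]
      congr 1
      · push_cast; ring_nf
      · apply Finset.sum_congr rfl
        intro q _
        push_cast
        ring_nf
    have hB : (∑ q ∈ antidiagonal (n + 1),
          aa q.1 * aa q.2 * Real.cos (((q.1 : ℝ) - ((q.2 : ℝ) + 1)) * θ))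
        = aa 0 * aa (n + 1) * Real.cos (((n : ℝ) + 2) * θ)
          + ∑ q ∈ antidiagonal n,
            aa (q.1 + 1) * aa q.2 * Real.cos (((q.1 : ℝ) - (q.2 : ℝ)) * θ) := by
      rw [Finset.Nat.sum_antidiagonal_succ
        (f := fun q => aa q.1 * aa q.2 * Real.cos (((q.1 : ℝ) - ((q.2 : ℝ) + 1)) * θ))]
      congr 1
      · show aa 0 * aa (n + 1) * Real.cos ((((0:ℕ) : ℝ) - ((((n+1):ℕ) : ℝ) + 1)) * θ) = _
        push_cast
        rw [show ((0 : ℝ) - ((n : ℝ) + 1 + 1)) * θ = -(((n : ℝ) + 2) * θ) by ring, Real.cos_neg]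
      · apply Finset.sum_congr rfl
        intro q _
        push_cast
        ring_nf
    
    have hF2 : (∑ q ∈ antidiagonal (n + 2),
          aa q.1 * aa q.2 * Real.cos (((q.1 : ℝ) - (q.2 : ℝ)) * θ))
        = aa 0 * aa (n + 2) * Real.cos (((n : ℝ) + 2) * θ)
          + (aa (n + 2) * aa 0 * Real.cos (((n : ℝ) + 2) * θ)
          + ∑ q ∈ antidiagonal n,
            aa (q.1 + 1) * aa (q.2 + 1) * Real.cos (((q.1 : ℝ) - (q.2 : ℝ)) * θ)) := by
      rw [Finset.Nat.sum_antidiagonal_succ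
        (f := fun q => aa q.1 * aa q.2 * Real.cos (((q.1 : ℝ) - (q.2 : ℝ)) * θ))]
      congr 1
      · show aa 0 * aa (n + 2) * Real.cos ((((0:ℕ) : ℝ) - (((n+2 : ℕ)) : ℝ)) * θ) = _
        push_cast
        rw [show ((0 : ℝ) - ((n : ℝ) + 2)) * θ = -(((n : ℝ) + 2) * θ) by ring, Real.cos_neg]
      · rw [Finset.Nat.sum_antidiagonal_succ'
          (f := fun q => aa (q.1 + 1) * aa q.2 * Real.cos ((((q.1 + 1 : ℕ) : ℝ) - (q.2 : ℝ)) * θ))]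
        congr 1
        · show aa (n + 2) * aa 0 * Real.cos ((((n + 2 : ℕ) : ℝ) - ((0:ℕ) : ℝ)) * θ) = _
          push_cast
          ring_nf
        · apply Finset.sum_congr rfl
          intro q _
          push_cast
          ring_nf
    have hb : aa (n + 2) * (2 * (n : ℝ) + 4) = aa (n + 1) * (2 * (n : ℝ) + 3) := by
      rw [aa_succ (n + 1)]
      have : (2 * ((n:ℕ)+1 : ℕ) + 2 : ℝ) ≠ 0 := by positivity
      push_cast
      field_simp
      ring
    have hsum : (2 * (n : ℝ) + 3) / 2 * (∑ q ∈ antidiagonal n,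
          aa q.1 * aa (q.2 + 1) * Real.cos (((q.1 : ℝ) - (q.2 : ℝ)) * θ))
        + (2 * (n : ℝ) + 3) / 2 * (∑ q ∈ antidiagonal n,
          aa (q.1 + 1) * aa q.2 * Real.cos (((q.1 : ℝ) - (q.2 : ℝ)) * θ))
        - ((n : ℝ) + 1) * (∑ q ∈ antidiagonal n,
          aa q.1 * aa q.2 * Real.cos (((q.1 : ℝ) - (q.2 : ℝ)) * θ))
        = ((n : ℝ) + 2) * ∑ q ∈ antidiagonal n,
          aa (q.1 + 1) * aa (q.2 + 1) * Real.cos (((q.1 : ℝ) - (q.2 : ℝ)) * θ) := by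
      rw [Finset.mul_sum, Finset.mul_sum, Finset.mul_sum, Finset.mul_sum,
        ← Finset.sum_add_distrib, ← Finset.sum_sub_distrib]
      apply Finset.sum_congr rfl
      intro q hq
      have hij : (q.1 : ℝ) + (q.2 : ℝ) = (n : ℝ) := by
        exact_mod_cast Finset.HasAntidiagonal.mem_antidiagonal.mp hq
      rw [aa_succ q.1, aa_succ q.2, ← hij]
      have d1 : (2 * (q.1 : ℝ) + 2) ≠ 0 := by positivity
      have d2 : (2 * (q.2 : ℝ) + 2) ≠ 0 := by positivity
      field_simp
      ring
    rw [mul_assoc, hcF, hA, hB, hF2]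
    linear_combination hsum - aa 0 * Real.cos (((n : ℝ) + 2) * θ) * hb

lemma P_one : ∀ n, P n 1 = 1 := by
  apply two_step
  · simp [P]
  · simp [P]
  · intro n ih0 ih1
    show ((2 * (n : ℝ) + 3) * 1 * P (n + 1) 1 - ((n : ℝ) + 1) * P n 1) / ((n : ℝ) + 2) = 1
    rw [ih0, ih1]
    have hne : ((n : ℝ) + 2) ≠ 0 := by positivity
    field_simp
    ring

lemma sum_aa (n : ℕ) : ∑ q ∈ antidiagonal n, aa q.1 * aa q.2 = 1 := by
  have := P_cos 0 n
  rw [Real.cos_zero, P_one n] at this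
  simp only [mul_zero, Real.cos_zero, mul_one] at this
  exact this.symm

lemma P_bound (n : ℕ) (t : ℝ) (h1 : -1 ≤ t) (h2 : t ≤ 1) : |P n t| ≤ 1 := by
  have hc : Real.cos (Real.arccos t) = t := Real.cos_arccos h1 h2
  rw [← hc, P_cos]
  calc |∑ q ∈ antidiagonal n, aa q.1 * aa q.2 * Real.cos (((q.1 : ℝ) - (q.2 : ℝ)) * Real.arccos t)|
      ≤ ∑ q ∈ antidiagonal n, |aa q.1 * aa q.2 * Real.cos (((q.1 : ℝ) - (q.2 : ℝ)) * Real.arccos t)| :=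
        Finset.abs_sum_le_sum_abs _ _
    _ ≤ ∑ q ∈ antidiagonal n, aa q.1 * aa q.2 := by
        apply Finset.sum_le_sum
        intro q _
        rw [abs_mul, abs_mul, abs_of_pos (aa_pos q.1), abs_of_pos (aa_pos q.2)]
        exact mul_le_of_le_one_right
          (mul_nonneg (aa_pos q.1).le (aa_pos q.2).le)
          (Real.abs_cos_le_one (((q.1 : ℝ) - (q.2 : ℝ)) * Real.arccos t))
    _ = 1 := sum_aa n

lemma N1 : ∀ m : ℕ, 16 * (4 * (m+1)^2 + 2*(m+1) + 1) ≤ 39 * 4^(m+1) := by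
  intro m
  induction m with
  | zero => norm_num
  | succ k ih =>
    have h4 : 39 * 4^(k+2) = 4*(39*4^(k+1)) := by ring
    rw [h4]
    nlinarith [ih]

lemma N1R (m : ℕ) : 4 * ((m:ℝ)+1)^2 + 2*((m:ℝ)+1) + 1 ≤ 39/4 * 4^m := by
  have := N1 m
  have h : (16 * (4 * ((m:ℕ)+1)^2 + 2*((m:ℕ)+1) + 1) : ℝ) ≤ 39 * 4^(m+1) := by
    exact_mod_cast this
  push_cast at h
  rw [pow_succ (4:ℝ) m] at h
  nlinarith [h]

set_option maxHeartbeats 1600000 in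
theorem stmt14 (n T : ℕ) (hn : 1 ≤ n) (hT : 1 ≤ T)
    (h : (1 : ℝ) + 2 * n + 2 * (n : ℝ) ^ 2 < (T : ℝ) ^ 2 / 10) :
    ∀ t : ℝ, -1 ≤ t → t ≤ 1 →
      |p T n t - P n t| ≤ (3 / 2) * 4 ^ n / (T : ℝ) ^ 2 := by
  have hT1 : (1:ℝ) ≤ (T:ℝ) := by exact_mod_cast hT
  have hT0 : (0:ℝ) < (T:ℝ)^2 := by nlinarith
  have main : ∀ m : ℕ, (m ≤ n → ∀ t : ℝ, -1 ≤ t → t ≤ 1 →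
      |p T m t - P m t| ≤ (3 / 2) * 4 ^ m / (T : ℝ) ^ 2) := by
    apply two_step
    · intro _ t _ _
      show |p T 0 t - P 0 t| ≤ _
      simp only [p, P]
      simp only [sub_self, abs_zero]
      positivity
    · intro _ t _ _
      show |p T 1 t - P 1 t| ≤ _
      simp only [p, P]
      rw [show t + 1 / (2 * (T : ℝ) ^ 2) - t = 1 / (2 * (T:ℝ)^2) by ring]
      rw [abs_of_nonneg (by positivity)]
      rw [div_le_div_iff₀ (by positivity) hT0]
      nlinarith
    · intro m ih0 ih1 hm t ht1 ht2
      have hE1 := ih1 (by omega) t ht1 ht2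
      have hE0 := ih0 (by omega) t ht1 ht2
      have hQ1 := P_bound (m+1) t ht1 ht2
      have hQ0 := P_bound m t ht1 ht2
      have habs_t : |t| ≤ 1 := abs_le.mpr ⟨ht1, ht2⟩
      have hMn : ((m:ℝ)+1) + 1 ≤ (n:ℝ) := by exact_mod_cast hm
      have hM1 : (1:ℝ) ≤ (m:ℝ)+1 := by
        have : (0:ℝ) ≤ (m:ℝ) := Nat.cast_nonneg m
        linarith
      have h10 : 10 * (2*((m:ℝ)+1)^2 + 2*((m:ℝ)+1) + 1) ≤ (T:ℝ)^2 := by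
        nlinarith [h, hMn, hM1]
      have hMT : ((m:ℝ)+1)^2/(T:ℝ)^2 ≤ 1 := by
        rw [div_le_one hT0]; nlinarith
      have hx0 : 0 ≤ ((m:ℝ)+1)^2/(T:ℝ)^2 := by positivity
      have hD : p T (m+2) t - P (m+2) t =
          (2*((m:ℝ)+1)+1)/(((m:ℝ)+1)+1) * t * (p T (m+1) t - P (m+1) t)
          + (2*((m:ℝ)+1)+1)/(((m:ℝ)+1)+1) *
              ((2*((m:ℝ)+1)^2+2*((m:ℝ)+1)+1)/(2*(T:ℝ)^2)) * p T (m+1) t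
          - (1 - ((m:ℝ)+1)^2/(T:ℝ)^2)^2 * (((m:ℝ)+1)/(((m:ℝ)+1)+1)) * (p T m t - P m t)
          - ((1 - ((m:ℝ)+1)^2/(T:ℝ)^2)^2 - 1) * (((m:ℝ)+1)/(((m:ℝ)+1)+1)) * P m t := by
        simp only [p, P]
        ring
      set A1 := (2*((m:ℝ)+1)+1)/(((m:ℝ)+1)+1) * t * (p T (m+1) t - P (m+1) t) with hA1
      set A2 := (2*((m:ℝ)+1)+1)/(((m:ℝ)+1)+1) *
          ((2*((m:ℝ)+1)^2+2*((m:ℝ)+1)+1)/(2*(T:ℝ)^2)) * p T (m+1) t with hA2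
      set A3 := (1 - ((m:ℝ)+1)^2/(T:ℝ)^2)^2 * (((m:ℝ)+1)/(((m:ℝ)+1)+1)) *
          (p T m t - P m t) with hA3
      set A4 := ((1 - ((m:ℝ)+1)^2/(T:ℝ)^2)^2 - 1) * (((m:ℝ)+1)/(((m:ℝ)+1)+1)) * P m t with hA4
      have hα : (2*((m:ℝ)+1)+1)/(((m:ℝ)+1)+1) ≤ 2 := by
        rw [div_le_iff₀ (by positivity)]; nlinarith
      have hαnn : 0 ≤ (2*((m:ℝ)+1)+1)/(((m:ℝ)+1)+1) := by positivity
      have hβ : ((m:ℝ)+1)/(((m:ℝ)+1)+1) ≤ 1 := by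
        rw [div_le_one (by positivity)]; nlinarith
      have hβnn : 0 ≤ ((m:ℝ)+1)/(((m:ℝ)+1)+1) := by positivity
      have hγ : (1 - ((m:ℝ)+1)^2/(T:ℝ)^2)^2 ≤ 1 := by nlinarith [hMT, hx0]
      have hγnn : 0 ≤ (1 - ((m:ℝ)+1)^2/(T:ℝ)^2)^2 := by positivity
      have hγ1 : |(1 - ((m:ℝ)+1)^2/(T:ℝ)^2)^2 - 1| ≤ 2*(((m:ℝ)+1)^2/(T:ℝ)^2) := by
        rw [abs_le]; constructor <;> nlinarith [hMT, hx0]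
      have hq1 : |p T (m+1) t| ≤ 1 + (3/2) * 4^(m+1)/(T:ℝ)^2 := by
        calc |p T (m+1) t| = |P (m+1) t + (p T (m+1) t - P (m+1) t)| := by congr 1; ring
          _ ≤ |P (m+1) t| + |p T (m+1) t - P (m+1) t| := abs_add_le _ _
          _ ≤ 1 + (3/2) * 4^(m+1)/(T:ℝ)^2 := by linarith [hQ1, hE1]
      have b1 : |A1| ≤ 2 * ((3/2) * 4^(m+1)/(T:ℝ)^2) := by
        rw [hA1, abs_mul, abs_mul, abs_of_nonneg hαnn]
        have h2 := mul_le_mul (mul_le_mul hα habs_t (abs_nonneg _) (by norm_num)) hE1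
          (abs_nonneg _) (by norm_num)
        linarith [h2]
      have b2 : |A2| ≤ (2*((m:ℝ)+1)^2+2*((m:ℝ)+1)+1)/(T:ℝ)^2
          + (1/10)*((3/2) * 4^(m+1)/(T:ℝ)^2) := by
        rw [hA2, abs_mul, abs_mul, abs_of_nonneg hαnn, abs_of_nonneg
          (show (0:ℝ) ≤ (2*((m:ℝ)+1)^2+2*((m:ℝ)+1)+1)/(2*(T:ℝ)^2) by positivity)]
        have key1 : (2*((m:ℝ)+1)^2+2*((m:ℝ)+1)+1)/(T:ℝ)^2 ≤ 1/10 := by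
          rw [div_le_iff₀ hT0]; linarith [h10]
        have hmm := mul_le_mul (mul_le_mul hα le_rfl
          (show (0:ℝ) ≤ (2*((m:ℝ)+1)^2+2*((m:ℝ)+1)+1)/(2*(T:ℝ)^2) by positivity)
          (by norm_num)) hq1 (abs_nonneg _) (by positivity)
        have key2 : (2*((m:ℝ)+1)^2+2*((m:ℝ)+1)+1)/(T:ℝ)^2 * ((3/2)*4^(m+1)/(T:ℝ)^2)
            ≤ (1/10) * ((3/2)*4^(m+1)/(T:ℝ)^2) :=
          mul_le_mul_of_nonneg_right key1 (by positivity)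
        have hc2 : 2 * ((2*((m:ℝ)+1)^2+2*((m:ℝ)+1)+1)/(2*(T:ℝ)^2))
            * (1 + (3/2) * 4^(m+1)/(T:ℝ)^2)
            = (2*((m:ℝ)+1)^2+2*((m:ℝ)+1)+1)/(T:ℝ)^2
              + (2*((m:ℝ)+1)^2+2*((m:ℝ)+1)+1)/(T:ℝ)^2 * ((3/2)*4^(m+1)/(T:ℝ)^2) := by
          field_simp
        rw [hc2] at hmm
        linarith [hmm, key2]
      have b3 : |A3| ≤ (3/2) * 4^m/(T:ℝ)^2 := by
        rw [hA3, abs_mul, abs_mul, abs_of_nonneg hγnn, abs_of_nonneg hβnn]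
        have h2 := mul_le_mul (mul_le_mul hγ hβ hβnn (by norm_num)) hE0
          (abs_nonneg _) (by norm_num)
        linarith [h2]
      have b4 : |A4| ≤ 2*(((m:ℝ)+1)^2/(T:ℝ)^2) := by
        rw [hA4, abs_mul, abs_mul, abs_of_nonneg hβnn]
        have h2 := mul_le_mul (mul_le_mul hγ1 hβ hβnn (by positivity)) hQ0
          (abs_nonneg _) (by positivity)
        linarith [h2]
      have tri : |p T (m+2) t - P (m+2) t| ≤ |A1| + |A2| + |A3| + |A4| := by
        rw [hD]
        calc |A1 + A2 - A3 - A4| ≤ |A1 + A2 - A3| + |A4| := abs_sub _ _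
          _ ≤ |A1 + A2| + |A3| + |A4| := by linarith [abs_sub (A1+A2) A3]
          _ ≤ |A1| + |A2| + |A3| + |A4| := by linarith [abs_add_le A1 A2]
      have hN := N1R m
      have hNu : (4*((m:ℝ)+1)^2+2*((m:ℝ)+1)+1)/(T:ℝ)^2 ≤ ((39:ℝ)/4 * 4^m)/(T:ℝ)^2 :=
        (div_le_div_iff_of_pos_right hT0).mpr hN
      calc |p T (m+2) t - P (m+2) t| ≤ |A1| + |A2| + |A3| + |A4| := tri
        _ ≤ 2 * ((3/2) * 4^(m+1)/(T:ℝ)^2)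
            + ((2*((m:ℝ)+1)^2+2*((m:ℝ)+1)+1)/(T:ℝ)^2 + (1/10)*((3/2) * 4^(m+1)/(T:ℝ)^2))
            + (3/2) * 4^m/(T:ℝ)^2 + 2*(((m:ℝ)+1)^2/(T:ℝ)^2) := by
              linarith [b1, b2, b3, b4]
        _ = (2 * ((3/2) * (4*4^m))
            + ((2*((m:ℝ)+1)^2+2*((m:ℝ)+1)+1) + (1/10)*((3/2) * (4*4^m)))
            + (3/2) * 4^m + 2*((m:ℝ)+1)^2) / (T:ℝ)^2 := by
              rw [pow_succ (4:ℝ) m]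
              ring
        _ ≤ (3/2) * 4^(m+2)/(T:ℝ)^2 := by
              rw [show ((4:ℝ))^(m+2) = 16 * 4^m by ring]
              apply (div_le_div_iff_of_pos_right hT0).mpr
              linarith [hN, pow_nonneg (by norm_num : (0:ℝ) ≤ 4) m]
  exact main n le_rfl
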